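/- Let (τ_i) for 0 ≤ i ≤ n be a real sequence satisfying the recurrence √β_{i+1}·τ_{i+1} = (x − α_i)·τ_i − √β_i·τ_{i−1} for 0 ≤ i < n (with τ_{−1}=0), where β_i > 0. Set h = min_{0≤i≤n} √β_i, R = max_{0≤i≤n} √β_i, and C = max_{0≤i≤n} |x − α_i|. Then for all 0 ≤ i ≤ n, |τ_i| ≤ |τ_0|·(C/h)^i · Σ_{j=0}^{⌊i/2⌋} binom(i−j, j)·(R·h/C²)^j. -/

import Mathlib

open Finset

lemma chooseId (i k : ℕ) :
    Nat.choose (i + 1 - k) (k + 1) = Nat.choose (i - k) k + Nat.choose (i - k) (k + 1) := by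
  rcases le_or_gt k i with hk | hk
  · have : i + 1 - k = (i - k) + 1 := by omega
    rw [this, Nat.choose_succ_succ]
  · have e1 : i + 1 - k = 0 := by omega
    have e2 : i - k = 0 := by omega
    rw [e1, e2, Nat.choose_eq_zero_of_lt (show 0 < k by omega)]
    omega

lemma Spad (q : ℝ) (m M : ℕ) (hM : m / 2 + 1 ≤ M) :
    ∑ j ∈ Finset.range M, ((m - j).choose j : ℝ) * q ^ j
      = ∑ j ∈ Finset.range (m / 2 + 1), ((m - j).choose j : ℝ) * q ^ j := by
  refine (Finset.sum_subset (Finset.range_subset_range.mpr hM) ?_).symm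
  intro j hj hj2
  simp only [Finset.mem_range] at hj hj2
  rw [Nat.choose_eq_zero_of_lt (by omega)]
  simp

lemma Srec (q : ℝ) (i : ℕ) :
    ∑ j ∈ Finset.range ((i + 2) / 2 + 1), ((i + 2 - j).choose j : ℝ) * q ^ j
      = (∑ j ∈ Finset.range ((i + 1) / 2 + 1), ((i + 1 - j).choose j : ℝ) * q ^ j)
        + q * ∑ j ∈ Finset.range (i / 2 + 1), ((i - j).choose j : ℝ) * q ^ j := by
  set N := i / 2 + 1 with hN
  have e2 : (i + 2) / 2 + 1 = N + 1 := by omega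
  have lhs : ∑ j ∈ Finset.range ((i + 2) / 2 + 1), ((i + 2 - j).choose j : ℝ) * q ^ j
      = (∑ k ∈ Finset.range N, ((i + 1 - (k + 1)).choose (k + 1) : ℝ) * q ^ (k + 1)
          + q * ∑ k ∈ Finset.range N, ((i - k).choose k : ℝ) * q ^ k) + 1 := by
    rw [e2, Finset.sum_range_succ', Finset.mul_sum, ← Finset.sum_add_distrib]
    have key : ∀ k ∈ Finset.range N,
        ((i + 2 - (k + 1)).choose (k + 1) : ℝ) * q ^ (k + 1)
          = ((i + 1 - (k + 1)).choose (k + 1) : ℝ) * q ^ (k + 1)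
            + q * (((i - k).choose k : ℝ) * q ^ k) := by
      intro k _
      have e3 : i + 2 - (k + 1) = i + 1 - k := by omega
      have e4 : i + 1 - (k + 1) = i - k := by omega
      rw [e3, e4, chooseId]
      push_cast
      ring
    rw [Finset.sum_congr rfl key]
    simp
  have rhs : ∑ j ∈ Finset.range ((i + 1) / 2 + 1), ((i + 1 - j).choose j : ℝ) * q ^ j
      = ∑ k ∈ Finset.range N, ((i + 1 - (k + 1)).choose (k + 1) : ℝ) * q ^ (k + 1) + 1 := by
    rw [← Spad q (i + 1) (N + 1) (by omega), Finset.sum_range_succ']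
    simp
  rw [lhs, rhs]
  ring

theorem tau_bound
    (n : ℕ) (α β : ℕ → ℝ) (x : ℝ) (τ : ℕ → ℝ)
    (hβ : ∀ i ≤ n, 0 < β i)
    (hrec : ∀ i < n, Real.sqrt (β (i + 1)) * τ (i + 1)
      = (x - α i) * τ i - Real.sqrt (β i) * (if i = 0 then 0 else τ (i - 1)))
    (h R C : ℝ)
    (hh : h = (Finset.range (n + 1)).inf'
      (Finset.nonempty_range_iff.mpr (Nat.succ_ne_zero n)) (fun i => Real.sqrt (β i)))
    (hR : R = (Finset.range (n + 1)).sup'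
      (Finset.nonempty_range_iff.mpr (Nat.succ_ne_zero n)) (fun i => Real.sqrt (β i)))
    (hC : C = (Finset.range (n + 1)).sup'
      (Finset.nonempty_range_iff.mpr (Nat.succ_ne_zero n)) (fun i => |x - α i|))
    (hCpos : 0 < C) :
    ∀ i ≤ n, |τ i| ≤ |τ 0| * (C / h) ^ i *
      ∑ j ∈ Finset.range (i / 2 + 1),
        (Nat.choose (i - j) j : ℝ) * (R * h / C ^ 2) ^ j := by
  have hhle : ∀ i ≤ n, h ≤ Real.sqrt (β i) := by
    intro i hi
    rw [hh]
    exact Finset.inf'_le (fun j => Real.sqrt (β j)) (show i ∈ Finset.range (n + 1) from Finset.mem_range.mpr (by omega))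
  have hRge : ∀ i ≤ n, Real.sqrt (β i) ≤ R := by
    intro i hi
    rw [hR]
    exact Finset.le_sup' (fun j => Real.sqrt (β j)) (show i ∈ Finset.range (n + 1) from Finset.mem_range.mpr (by omega))
  have hCge : ∀ i ≤ n, |x - α i| ≤ C := by
    intro i hi
    rw [hC]
    exact Finset.le_sup' (fun j => |x - α j|) (show i ∈ Finset.range (n + 1) from Finset.mem_range.mpr (by omega))
  have hhpos : 0 < h := by
    obtain ⟨j, hj, hje⟩ := Finset.exists_mem_eq_inf'
      (Finset.nonempty_range_iff.mpr (Nat.succ_ne_zero n)) (fun i => Real.sqrt (β i))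
    rw [hh, hje]
    exact Real.sqrt_pos.mpr (hβ j (by simpa [Nat.lt_succ_iff] using hj))
  have hRpos : 0 < R := lt_of_lt_of_le hhpos (le_trans (hhle 0 (Nat.zero_le n)) (hRge 0 (Nat.zero_le n)))
  intro i
  induction i using Nat.strong_induction_on with
  | _ i ih =>
    intro hi
    match i with
    | 0 => simp
    | 1 =>
      have e := hrec 0 (by omega)
      simp only [zero_add, if_pos, mul_zero, sub_zero] at e
      have hb : h * |τ 1| ≤ C * |τ 0| := by
        calc h * |τ 1| ≤ Real.sqrt (β 1) * |τ 1| :=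
              mul_le_mul_of_nonneg_right (hhle 1 hi) (abs_nonneg _)
          _ = |Real.sqrt (β 1) * τ 1| := by
              rw [abs_mul, abs_of_nonneg (Real.sqrt_nonneg _)]
          _ = |x - α 0| * |τ 0| := by rw [e, abs_mul]
          _ ≤ C * |τ 0| := mul_le_mul_of_nonneg_right (hCge 0 (Nat.zero_le n)) (abs_nonneg _)
      have hstep : |τ 1| ≤ C * |τ 0| / h := by
        rw [le_div_iff₀ hhpos]; linarith
      refine le_trans hstep (le_of_eq ?_)
      norm_num
      ring
    | (i + 2) =>
      set q : ℝ := R * h / C ^ 2 with hq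
      have hq0 : 0 ≤ q := by positivity
      have ih1 := ih (i + 1) (by omega) (by omega)
      have ih0 := ih i (by omega) (by omega)
      have e := hrec (i + 1) (by omega)
      rw [if_neg (Nat.succ_ne_zero i)] at e
      simp only [Nat.add_sub_cancel] at e
      have hb : h * |τ (i + 2)| ≤ C * |τ (i + 1)| + R * |τ i| := by
        calc h * |τ (i + 2)| ≤ Real.sqrt (β (i + 2)) * |τ (i + 2)| :=
              mul_le_mul_of_nonneg_right (hhle (i + 2) hi) (abs_nonneg _)
          _ = |Real.sqrt (β (i + 2)) * τ (i + 2)| := by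
              rw [abs_mul, abs_of_nonneg (Real.sqrt_nonneg _)]
          _ = |(x - α (i + 1)) * τ (i + 1) - Real.sqrt (β (i + 1)) * τ i| := by rw [e]
          _ ≤ |(x - α (i + 1)) * τ (i + 1)| + |Real.sqrt (β (i + 1)) * τ i| :=
              abs_sub _ _
          _ = |x - α (i + 1)| * |τ (i + 1)| + Real.sqrt (β (i + 1)) * |τ i| := by
              rw [abs_mul, abs_mul, abs_of_nonneg (Real.sqrt_nonneg _)]
          _ ≤ C * |τ (i + 1)| + R * |τ i| := by
              gcongr
              · exact hCge (i + 1) (by omega)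
              · exact hRge (i + 1) (by omega)
      have hchain : h * |τ (i + 2)| ≤
          C * (|τ 0| * (C / h) ^ (i + 1) *
            ∑ j ∈ Finset.range ((i + 1) / 2 + 1), ((i + 1 - j).choose j : ℝ) * q ^ j)
          + R * (|τ 0| * (C / h) ^ i *
            ∑ j ∈ Finset.range (i / 2 + 1), ((i - j).choose j : ℝ) * q ^ j) := by
        have t1 := mul_le_mul_of_nonneg_left ih1 (le_of_lt hCpos)
        have t2 := mul_le_mul_of_nonneg_left ih0 (le_of_lt hRpos)
        linarith
      rw [← le_div_iff₀' hhpos] at hchain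
      refine le_trans hchain (le_of_eq ?_)
      rw [Srec q i]
      have hC' : C ≠ 0 := ne_of_gt hCpos
      have hh' : h ≠ 0 := ne_of_gt hhpos
      rw [hq]
      field_simp
      ring_nf
      field_simp
      ring
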